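/- Suppose G is a graph such that for every set S of vertices with |S| ≤ ε₀ n we have |N_G(S)| ≥ 2|S|, where ε₀ > 0. Let End(v_0) be the Pósa end-set of a longest path starting at v_0. Then |End(v_0)| > ε₀ n. -/

import Mathlib

/-- `q` is obtained from the path `p` (from `v₀` to `w`) by a single Pósa rotation. -/
def IsPosaRotation {V : Type*} (G : SimpleGraph V) {v0 w y : V}
    (p : G.Walk v0 w) (q : G.Walk v0 y) : Prop :=
  ∃ i : ℕ, i + 1 < p.length ∧ G.Adj (p.getVert i) w ∧ y = p.getVert (i + 1) ∧
    q.support = p.support.take (i + 1) ++ (p.support.drop (i + 1)).reverse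

/-- The paths obtainable from `p0` by a sequence of Pósa rotations fixing `v₀`. -/
inductive PosaReachable {V : Type*} (G : SimpleGraph V) {v0 w0 : V} (p0 : G.Walk v0 w0) :
    ∀ {w : V}, G.Walk v0 w → Prop
  | base : PosaReachable G p0 p0
  | rot {w y : V} (p : G.Walk v0 w) (q : G.Walk v0 y) :
      PosaReachable G p0 p → IsPosaRotation G p q → PosaReachable G p0 q

/-- `End(v₀)`: the set of endpoints other than `v₀` of paths obtainable from `p0` by
sequences of Pósa rotations with fixed endpoint `v₀`. -/
def posaEnd {V : Type*} (G : SimpleGraph V) {v0 w0 : V} (p0 : G.Walk v0 w0) : Set V :=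
  {y | y ≠ v0 ∧ ∃ q : G.Walk v0 y, PosaReachable G p0 q}

/-- The external neighbourhood `N_G(S) = {u ∉ S : u has a neighbour in S}`. -/
def extNbhd {V : Type*} (G : SimpleGraph V) (S : Set V) : Set V :=
  {u | u ∉ S ∧ ∃ s ∈ S, G.Adj s u}


open List

namespace PosaAux

variable {V : Type*} {G : SimpleGraph V}

/-- consecutive pairs of a list, as `Sym2`s -/
def pairs (l : List V) : List (Sym2 V) := List.zipWith (fun a b => s(a,b)) l l.tail

@[simp] lemma pairs_nil : pairs ([] : List V) = [] := rfl
@[simp] lemma pairs_single (a : V) : pairs [a] = [] := rfl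
@[simp] lemma pairs_cons_cons (a b : V) (l : List V) :
    pairs (a :: b :: l) = s(a,b) :: pairs (b :: l) := rfl

lemma edges_eq_pairs {u v : V} (p : G.Walk u v) : p.edges = pairs p.support := by
  induction p with
  | nil => rfl
  | cons h q ih =>
    rw [SimpleGraph.Walk.edges_cons, SimpleGraph.Walk.support_cons, ih,
      q.support_eq_cons]
    rfl

lemma pairs_append {l₁ l₂ : List V} (h₁ : l₁ ≠ []) (h₂ : l₂ ≠ []) :
    pairs (l₁ ++ l₂) = pairs l₁ ++ s(l₁.getLast h₁, l₂.head h₂) :: pairs l₂ := by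
  induction l₁ with
  | nil => simp at h₁
  | cons a t ih =>
    cases t with
    | nil =>
      cases l₂ with
      | nil => simp at h₂
      | cons c t₂ => simp [pairs]
    | cons b t' =>
      have := ih (by simp)
      simp only [cons_append, pairs_cons_cons] at *
      rw [this]
      simp

lemma pairs_reverse (l : List V) : pairs l.reverse = (pairs l).reverse := by
  induction l with
  | nil => rfl
  | cons a t ih =>
    cases t with
    | nil => rfl
    | cons b t' =>
      rw [pairs_cons_cons, List.reverse_cons (a := a), pairs_append (by simp) (by simp), ih,
        List.reverse_cons (a := s(a,b))]
      simp only [getLast_reverse, head_cons, pairs_single]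
      simp [Sym2.eq_swap]

lemma mem_edges_iff {u v : V} (p : G.Walk u v) {e : Sym2 V} :
    e ∈ p.edges ↔ ∃ i, i < p.length ∧ e = s(p.getVert i, p.getVert (i+1)) := by
  induction p with
  | nil => simp
  | @cons a b c h q ih =>
    simp only [SimpleGraph.Walk.edges_cons, mem_cons, ih, SimpleGraph.Walk.length_cons]
    constructor
    · rintro (rfl | ⟨i, hi, rfl⟩)
      · exact ⟨0, by omega, by simp [SimpleGraph.Walk.getVert_cons_succ]⟩
      · exact ⟨i + 1, by omega, by simp [SimpleGraph.Walk.getVert_cons_succ]⟩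
    · rintro ⟨i, hi, rfl⟩
      cases i with
      | zero => left; simp [SimpleGraph.Walk.getVert_cons_succ]
      | succ j =>
        right
        exact ⟨j, by omega, by simp [SimpleGraph.Walk.getVert_cons_succ]⟩

lemma support_getElem {u v : V} (p : G.Walk u v) (i : ℕ) (h : i < p.support.length) :
    p.support[i] = p.getVert i := by
  induction p generalizing i with
  | nil =>
    simp only [SimpleGraph.Walk.support_nil, length_cons, length_nil] at h
    interval_cases i
    · rfl
  | @cons a b c hadj q ih =>
    cases i with
    | zero => rfl
    | succ j =>
      simp only [SimpleGraph.Walk.support_cons, length_cons] at h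
      simpa [SimpleGraph.Walk.getVert_cons_succ] using ih j (by omega)

lemma getVert_inj {u v : V} {p : G.Walk u v} (hp : p.IsPath) {i j : ℕ}
    (hi : i ≤ p.length) (hj : j ≤ p.length) (h : p.getVert i = p.getVert j) : i = j := by
  have hi' : i < p.support.length := by rw [p.length_support]; omega
  have hj' : j < p.support.length := by rw [p.length_support]; omega
  have := (hp.support_nodup.getElem_inj_iff (hi := hi') (hj := hj'))
  rw [support_getElem _ _ hi', support_getElem _ _ hj'] at this
  exact this.mp h

lemma support_take_getLast {u v : V} (p : G.Walk u v) (i : ℕ) (hi : i ≤ p.length)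
    (h : p.support.take (i+1) ≠ []) : (p.support.take (i+1)).getLast h = p.getVert i := by
  have hlen : (p.support.take (i+1)).length = i + 1 := by
    rw [length_take, p.length_support]; omega
  rw [getLast_eq_getElem]
  simp only [hlen, Nat.add_sub_cancel]
  rw [List.getElem_take]
  exact support_getElem _ _ (by rw [p.length_support]; omega)

lemma support_drop_ne_nil {u v : V} (p : G.Walk u v) (i : ℕ) (hi : i ≤ p.length) :
    p.support.drop i ≠ [] := by
  have : (p.support.drop i).length = p.support.length - i := by rw [length_drop]
  intro hc
  rw [hc] at this
  rw [p.length_support] at this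
  simp at this
  omega

lemma support_drop_head {u v : V} (p : G.Walk u v) (i : ℕ) (hi : i ≤ p.length)
    (h : p.support.drop i ≠ []) : (p.support.drop i).head h = p.getVert i := by
  rw [List.head_drop]
  exact support_getElem _ _ (by rw [p.length_support]; omega)

lemma support_drop_getLast {u v : V} (p : G.Walk u v) (i : ℕ) (hi : i ≤ p.length)
    (h : p.support.drop i ≠ []) : (p.support.drop i).getLast h = v := by
  rw [List.getLast_drop]
  exact p.getLast_support

lemma exists_walk_of_chain : ∀ (l : List V) (a b : V), List.Chain G.Adj a l →
    (a :: l).getLast (cons_ne_nil a l) = b → ∃ q : G.Walk a b, q.support = a :: l := by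
  intro l
  induction l with
  | nil =>
    intro a b _ hb
    simp only [getLast_singleton] at hb
    subst hb
    exact ⟨SimpleGraph.Walk.nil, rfl⟩
  | cons c t ih =>
    intro a b hchain hb
    have hchain : List.IsChain G.Adj (a :: c :: t) := hchain
    rw [List.isChain_cons_cons] at hchain
    obtain ⟨hac, hchain⟩ := hchain
    have hb' : (c :: t).getLast (cons_ne_nil c t) = b := by
      rw [← hb]; exact (List.getLast_cons (cons_ne_nil c t)).symm
    obtain ⟨q, hq⟩ := ih c b hchain hb'
    exact ⟨SimpleGraph.Walk.cons hac q, by simp [hq]⟩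

end PosaAux

section Main

open List SimpleGraph PosaAux

variable {V : Type*} {G : SimpleGraph V}

lemma exists_walk_of_chain' : ∀ (l : List V) (a b : V), List.Chain' G.Adj (a :: l) →
    (a :: l).getLast? = some b → ∃ q : G.Walk a b, q.support = a :: l := by
  intro l
  induction l with
  | nil =>
    intro a b _ hb
    simp only [getLast?_singleton, Option.some.injEq] at hb
    subst hb
    exact ⟨SimpleGraph.Walk.nil, rfl⟩
  | cons c t ih =>
    intro a b hchain hb
    have hchain : List.IsChain G.Adj (a :: c :: t) := hchain
    rw [List.isChain_cons_cons] at hchain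
    rw [List.getLast?_cons_cons] at hb
    obtain ⟨q, hq⟩ := ih c b hchain.2 hb
    exact ⟨SimpleGraph.Walk.cons hchain.1 q, by simp [hq]⟩

lemma exists_rotation {v0 w : V} (p : G.Walk v0 w) (hp : p.IsPath) {i : ℕ}
    (hi : i + 1 < p.length) (hadj : G.Adj (p.getVert i) w) :
    ∃ q : G.Walk v0 (p.getVert (i+1)), IsPosaRotation G p q := by
  set A := p.support.take (i+1) with hA
  set B := p.support.drop (i+1) with hB
  have hslen : p.support.length = p.length + 1 := p.length_support
  have hAne : A ≠ [] := by
    rw [hA]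
    intro hc
    have := congrArg List.length hc
    simp only [length_take, hslen, length_nil] at this
    omega
  have hBne : B ≠ [] := support_drop_ne_nil p (i+1) (by omega)
  have hBrne : B.reverse ≠ [] := by simpa using hBne
  have hAlast : A.getLast hAne = p.getVert i := support_take_getLast p i (by omega) hAne
  have hBhead : B.head hBne = p.getVert (i+1) := support_drop_head p (i+1) (by omega) hBne
  have hchainA : List.Chain' G.Adj A := (p.isChain_adj_support).take _
  have hchainB : List.Chain' G.Adj B := (p.isChain_adj_support).drop _
  have hchainBr : List.Chain' G.Adj B.reverse := by
    show List.IsChain G.Adj B.reverse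
    rw [List.isChain_reverse]
    exact hchainB.imp (fun a b h => h.symm)
  have hBrlast : B.reverse.getLast hBrne = p.getVert (i+1) := by
    rw [getLast_reverse]
    exact hBhead
  have hjoin : ∀ x ∈ A.getLast?, ∀ y ∈ B.reverse.head?, G.Adj x y := by
    intro x hx y hy
    rw [getLast?_eq_getLast_of_ne_nil hAne, Option.mem_def, Option.some.injEq] at hx
    rw [head?_eq_head hBrne, Option.mem_def, Option.some.injEq] at hy
    subst hx; subst hy
    rw [hAlast, head_reverse]
    have : B.getLast hBne = w := support_drop_getLast p (i+1) (by omega) hBne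
    rw [this]
    exact hadj
  have hchain : List.Chain' G.Adj (A ++ B.reverse) := hchainA.append hchainBr hjoin
  have hAhead : A.head hAne = v0 := by
    rw [head_eq_getElem, List.getElem_take]
    have := support_getElem p 0 (by rw [hslen]; omega)
    simpa using this
  have hl : A ++ B.reverse = v0 :: (A.tail ++ B.reverse) := by
    conv_lhs => rw [← cons_head_tail hAne, hAhead]
    rfl
  have hlast : (A ++ B.reverse).getLast? = some (p.getVert (i+1)) := by
    rw [getLast?_append_of_ne_nil _ hBrne, getLast?_eq_getLast_of_ne_nil hBrne, hBrlast]
  rw [hl] at hchain hlast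
  obtain ⟨q, hq⟩ := exists_walk_of_chain' _ _ _ hchain hlast
  refine ⟨q, i, hi, hadj, rfl, ?_⟩
  rw [hq, ← hl]

lemma reachable_support_perm {v0 w0 y : V} {p0 : G.Walk v0 w0} {q : G.Walk v0 y}
    (h : PosaReachable G p0 q) : q.support.Perm p0.support := by
  induction h with
  | base => exact List.Perm.refl _
  | rot p q hr hrot ih =>
    obtain ⟨i, hi, hadj, hy, hsup⟩ := hrot
    refine List.Perm.trans ?_ ih
    rw [hsup]
    calc p.support.take (i+1) ++ (p.support.drop (i+1)).reverse
        ~ p.support.take (i+1) ++ p.support.drop (i+1) :=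
          List.Perm.append_left _ (List.reverse_perm _)
      _ = p.support := List.take_append_drop _ _

lemma reachable_isPath {v0 w0 y : V} {p0 : G.Walk v0 w0} (hp0 : p0.IsPath) {q : G.Walk v0 y}
    (h : PosaReachable G p0 q) : q.IsPath := by
  rw [SimpleGraph.Walk.isPath_def]
  exact ((reachable_support_perm h).nodup_iff).mpr hp0.support_nodup

lemma reachable_length {v0 w0 y : V} {p0 : G.Walk v0 w0} {q : G.Walk v0 y}
    (h : PosaReachable G p0 q) : q.length = p0.length := by
  have := (reachable_support_perm h).length_eq
  rw [q.length_support, p0.length_support] at this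
  omega

lemma reachable_end_ne {v0 w0 y : V} {p0 : G.Walk v0 w0} (hp0 : p0.IsPath)
    (hlen : 0 < p0.length) {q : G.Walk v0 y} (h : PosaReachable G p0 q) : y ≠ v0 := by
  have hq := reachable_isPath hp0 h
  have hql := reachable_length h
  intro hc
  have h0 : q.getVert 0 = v0 := q.getVert_zero
  have hL : q.getVert q.length = y := q.getVert_length
  have := getVert_inj hq (i := 0) (j := q.length) (by omega) (le_refl _) (by rw [h0, hL, hc])
  omega

lemma reachable_end_mem {v0 w0 y : V} {p0 : G.Walk v0 w0} (hp0 : p0.IsPath)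
    (hlen : 0 < p0.length) {q : G.Walk v0 y} (h : PosaReachable G p0 q) :
    y ∈ posaEnd G p0 :=
  ⟨reachable_end_ne hp0 hlen h, q, h⟩

lemma reachable_edges {v0 w0 : V} {p0 : G.Walk v0 w0} (hp0 : p0.IsPath)
    (hlen : 0 < p0.length) {y : V} {q : G.Walk v0 y}
    (h : PosaReachable G p0 q) : ∀ e ∈ p0.edges, (∀ z ∈ e, z ∉ posaEnd G p0) → e ∈ q.edges := by
  induction h with
  | base => exact fun e he _ => he
  | @rot w y p q hr hrot ih =>
    intro e he hz
    have hep : e ∈ p.edges := ih e he hz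
    obtain ⟨i, hi, hadj, hy, hsup⟩ := hrot
    have hpPath : p.IsPath := reachable_isPath hp0 hr
    set A := p.support.take (i+1) with hA
    set B := p.support.drop (i+1) with hB
    have hslen : p.support.length = p.length + 1 := p.length_support
    have hAne : A ≠ [] := by
      rw [hA]
      intro hc
      have := congrArg List.length hc
      simp only [length_take, hslen, length_nil] at this
      omega
    have hBne : B ≠ [] := support_drop_ne_nil p (i+1) (by omega)
    have hBrne : B.reverse ≠ [] := by simpa using hBne
    have hAlast : A.getLast hAne = p.getVert i := support_take_getLast p i (by omega) hAne
    have hBhead : B.head hBne = p.getVert (i+1) := support_drop_head p (i+1) (by omega) hBne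
    -- decompose p.edges
    have hpedges : p.edges = pairs A ++ s(p.getVert i, p.getVert (i+1)) :: pairs B := by
      rw [edges_eq_pairs, ← List.take_append_drop (i+1) p.support,
        pairs_append hAne hBne]
      rw [hAlast, hBhead]
    have hqedges : q.edges = pairs A ++ s(A.getLast hAne, (B.reverse).head hBrne) :: pairs B.reverse := by
      rw [edges_eq_pairs, hsup, pairs_append hAne hBrne]
    -- the new endpoint is in posaEnd
    have hymem : p.getVert (i+1) ∈ posaEnd G p0 := by
      have : PosaReachable G p0 q := .rot p q hr ⟨i, hi, hadj, hy, hsup⟩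
      rw [← hy]
      exact reachable_end_mem hp0 hlen this
    rw [hpedges] at hep
    rw [hqedges]
    rcases List.mem_append.mp hep with hmem | hmem
    · exact List.mem_append.mpr (Or.inl hmem)
    · rcases List.mem_cons.mp hmem with hmem | hmem
      · exfalso
        exact hz _ (by rw [hmem]; exact Sym2.mem_mk_right _ _) hymem
      · refine List.mem_append.mpr (Or.inr (List.mem_cons.mpr (Or.inr ?_)))
        rw [pairs_reverse, List.mem_reverse]
        exact hmem

end Main

section Main3

open List SimpleGraph PosaAux

variable {V : Type*} {G : SimpleGraph V}

lemma mem_support_of_adj_end {v0 w0 y x : V} {p0 : G.Walk v0 w0} (q : G.Walk v0 y)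
    (hq : q.IsPath) (hql : q.length = p0.length)
    (hmax : ∀ (a b : V) (r : G.Walk a b), r.IsPath → r.length ≤ p0.length)
    (hadj : G.Adj y x) : x ∈ q.support := by
  by_contra hc
  have hpath : (q.concat hadj).IsPath := by
    rw [SimpleGraph.Walk.isPath_def, SimpleGraph.Walk.support_concat,
      List.nodup_append]
    refine ⟨hq.support_nodup, List.nodup_singleton x, ?_⟩
    intro a ha b hb
    rw [List.mem_singleton] at hb
    subst hb
    exact fun h => hc (h ▸ ha)
  have := hmax _ _ _ hpath
  rw [SimpleGraph.Walk.length_concat] at this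
  omega

lemma succ_mem_end {v0 w0 y x : V} {p0 : G.Walk v0 w0} (hp0 : p0.IsPath) (hlen0 : 0 < p0.length)
    {q : G.Walk v0 y} (hr : PosaReachable G p0 q) (hx : x ∈ q.support) (hxy : x ≠ y)
    (hadj : G.Adj x y) :
    ∃ i, i + 1 ≤ q.length ∧ q.getVert i = x ∧ q.getVert (i+1) ∈ posaEnd G p0 := by
  have hq := reachable_isPath hp0 hr
  obtain ⟨i, hgv, hile⟩ := (SimpleGraph.Walk.mem_support_iff_exists_getVert).mp hx
  have hine : i ≠ q.length := fun hc => hxy (by rw [← hgv, hc, q.getVert_length])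
  rcases eq_or_lt_of_le (show i + 1 ≤ q.length by omega) with heq | hlt
  · refine ⟨i, by omega, hgv, ?_⟩
    rw [heq, q.getVert_length]
    exact reachable_end_mem hp0 hlen0 hr
  · obtain ⟨q', hrot⟩ := exists_rotation q hq hlt (by rw [hgv]; exact hadj)
    have : PosaReachable G p0 q' := .rot q q' hr hrot
    exact ⟨i, by omega, hgv, reachable_end_mem hp0 hlen0 this⟩

lemma crux {v0 w0 : V} {p0 : G.Walk v0 w0} (hp0 : p0.IsPath) (hlen0 : 0 < p0.length)
    (hmax : ∀ (a b : V) (r : G.Walk a b), r.IsPath → r.length ≤ p0.length)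
    {u : V} (hu : u ∈ extNbhd G (posaEnd G p0)) :
    ∃ j, j + 1 ≤ p0.length ∧ ((u = p0.getVert j ∧ p0.getVert (j+1) ∈ posaEnd G p0) ∨
      (u = p0.getVert (j+1) ∧ p0.getVert j ∈ posaEnd G p0)) := by
  obtain ⟨huS, y, hyS, hadj⟩ := hu
  obtain ⟨hyne, Q, hQ⟩ := hyS
  have hQpath := reachable_isPath hp0 hQ
  have hQlen := reachable_length hQ
  have huS' : u ∉ posaEnd G p0 := huS
  have huy : u ≠ y := fun hc => huS (hc ▸ (⟨hyne, Q, hQ⟩ : y ∈ posaEnd G p0))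
  have husup : u ∈ Q.support := mem_support_of_adj_end Q hQpath hQlen hmax hadj
  obtain ⟨i, hi1, hQi, hz⟩ := succ_mem_end hp0 hlen0 hQ husup huy hadj.symm
  have hup0 : u ∈ p0.support := (reachable_support_perm hQ).mem_iff.mp husup
  obtain ⟨j, hj, hjle⟩ := SimpleGraph.Walk.mem_support_iff_exists_getVert.mp hup0
  have hw0S : w0 ∈ posaEnd G p0 := reachable_end_mem hp0 hlen0 .base
  have hjne : j ≠ p0.length := by
    intro hc
    apply huS
    rw [← hj, hc, p0.getVert_length]
    exact hw0S
  by_contra hcon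
  push_neg at hcon
  have hzS : Q.getVert (i+1) ∈ posaEnd G p0 := hz
  have huz : u ≠ Q.getVert (i+1) := fun hc => huS (hc ▸ hzS)
  have key : ∀ g : V, s(u, g) ∈ p0.edges → g ∉ posaEnd G p0 →
      0 < i ∧ s(u, g) = s(Q.getVert (i-1), u) := by
    intro g hg hgS
    have hmemQ : s(u, g) ∈ Q.edges := by
      refine reachable_edges hp0 hlen0 hQ _ hg ?_
      intro t ht
      rcases Sym2.mem_iff.mp ht with rfl | rfl
      exacts [huS, hgS]
    obtain ⟨k, hk, hke⟩ := (mem_edges_iff Q).mp hmemQ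
    have humem : u ∈ s(Q.getVert k, Q.getVert (k+1)) := by
      rw [← hke]; exact Sym2.mem_mk_left _ _
    rcases Sym2.mem_iff.mp humem with hu1 | hu2
    · exfalso
      have hki : k = i := getVert_inj hQpath (by omega) (by omega) (by rw [← hu1, hQi])
      subst hki
      have : s(u, g) = s(u, Q.getVert (k+1)) := by rw [hke, ← hu1]
      rcases Sym2.eq_iff.mp this with ⟨-, h2⟩ | ⟨h1, -⟩
      · exact hgS (h2 ▸ hz)
      · exact huz h1
    · have hki : k + 1 = i := getVert_inj hQpath (by omega) (by omega) (by rw [← hu2, hQi])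
      refine ⟨by omega, ?_⟩
      rw [hke, ← hu2]
      have hik : i - 1 = k := by omega
      rw [hik]
  rcases Nat.eq_zero_or_pos j with hj0 | hjpos
  · -- u = v0, so i = 0, but key forces 0 < i
    have huv0 : u = v0 := by rw [← hj, hj0, p0.getVert_zero]
    have hi0 : i = 0 := getVert_inj hQpath (by omega) (by omega)
      (by rw [hQi, Q.getVert_zero, huv0])
    have hedge : s(u, p0.getVert 1) ∈ p0.edges := by
      rw [mem_edges_iff]
      exact ⟨0, by omega, by rw [← hj, hj0]⟩
    have h1S : p0.getVert 1 ∉ posaEnd G p0 := by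
      have := (hcon 0 (by omega)).1 (by rw [← hj, hj0])
      simpa using this
    have := key _ hedge h1S
    omega
  · have hjlt : j < p0.length := by omega
    have hedgeP : s(u, p0.getVert (j+1)) ∈ p0.edges := by
      rw [mem_edges_iff]
      exact ⟨j, hjlt, by rw [hj]⟩
    have hedgeM : s(u, p0.getVert (j-1)) ∈ p0.edges := by
      rw [mem_edges_iff]
      refine ⟨j - 1, by omega, ?_⟩
      have hj' : j - 1 + 1 = j := by omega
      rw [hj', hj]
      exact Sym2.eq_swap.symm
    have hSP : p0.getVert (j+1) ∉ posaEnd G p0 := (hcon j (by omega)).1 hj.symm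
    have hSM : p0.getVert (j-1) ∉ posaEnd G p0 := by
      have h2 := (hcon (j-1) (by omega)).2
      have hj' : j - 1 + 1 = j := by omega
      rw [hj'] at h2
      exact h2 hj.symm
    obtain ⟨hipos, heqP⟩ := key _ hedgeP hSP
    obtain ⟨-, heqM⟩ := key _ hedgeM hSM
    have heq : s(u, p0.getVert (j+1)) = s(u, p0.getVert (j-1)) := by rw [heqP, heqM]
    rcases Sym2.eq_iff.mp heq with ⟨-, h2⟩ | ⟨h1, -⟩
    · have := getVert_inj hp0 (i := j+1) (j := j-1) (by omega) (by omega) h2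
      omega
    · have := getVert_inj hp0 (i := j) (j := j-1) (by omega) (by omega) (by rw [hj, h1])
      omega

end Main3

open PosaAux in
/-- If `G` has minimum degree at least 2 and satisfies the expansion property
`|S| ≤ ε₀ n → |N_G(S)| ≥ 2|S|`, then the Pósa end-set of a longest path satisfies
`|End(v₀)| > ε₀ n`. -/
theorem stmt_4 {V : Type*} [Fintype V] [DecidableEq V] (G : SimpleGraph V) [DecidableRel G.Adj]
    (ε₀ : ℝ) (hε₀ : 0 < ε₀)
    (hdeg : ∀ v : V, 2 ≤ G.degree v)
    (hexp : ∀ S : Set V, (S.ncard : ℝ) ≤ ε₀ * Fintype.card V →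
      2 * S.ncard ≤ (extNbhd G S).ncard)
    (v0 w0 : V) (p0 : G.Walk v0 w0) (hp0 : p0.IsPath) (hlen : 0 < p0.length)
    (hmax : ∀ (x y : V) (q : G.Walk x y), q.IsPath → q.length ≤ p0.length) :
    ε₀ * Fintype.card V < ((posaEnd G p0).ncard : ℝ) := by
  classical
  set S := posaEnd G p0 with hS
  have hw0ne : w0 ≠ v0 := reachable_end_ne hp0 hlen .base
  have hw0S : w0 ∈ S := ⟨hw0ne, p0, .base⟩
  by_contra hcontra
  push_neg at hcontra
  have h2 : 2 * S.ncard ≤ (extNbhd G S).ncard := hexp S hcontra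
  have key : ∀ u ∈ extNbhd G S, ∃ j, j + 1 ≤ p0.length ∧
      ((u = p0.getVert j ∧ p0.getVert (j+1) ∈ S) ∨
       (u = p0.getVert (j+1) ∧ p0.getVert j ∈ S)) :=
    fun u hu => crux hp0 hlen hmax hu
  choose! jf hjf using key
  set f : V → V × Bool := fun u =>
    if u = p0.getVert (jf u) then (p0.getVert (jf u + 1), false) else (p0.getVert (jf u), true)
    with hf
  set T : Set (V × Bool) := (S ×ˢ {false}) ∪ ((S \ {w0}) ×ˢ {true}) with hT
  have hw0get : w0 = p0.getVert p0.length := p0.getVert_length.symm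
  have hmaps : ∀ u ∈ extNbhd G S, f u ∈ T := by
    intro u hu
    obtain ⟨hle, hdisj⟩ := hjf u hu
    by_cases hcase : u = p0.getVert (jf u)
    · have hA : p0.getVert (jf u + 1) ∈ S := by
        rcases hdisj with ⟨-, h⟩ | ⟨h1, -⟩
        · exact h
        · exfalso
          have := getVert_inj hp0 (i := jf u) (j := jf u + 1) (by omega) (by omega)
            (by rw [← hcase, ← h1])
          omega
      rw [hf]
      simp only [if_pos hcase]
      exact Or.inl ⟨hA, rfl⟩
    · rcases hdisj with ⟨h1, -⟩ | ⟨-, h2'⟩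
      · exact absurd h1 hcase
      · rw [hf]
        simp only [if_neg hcase]
        refine Or.inr ⟨⟨h2', ?_⟩, rfl⟩
        simp only [Set.mem_singleton_iff]
        intro hw
        have := getVert_inj hp0 (i := jf u) (j := p0.length) (by omega) le_rfl
          (by rw [hw, p0.getVert_length])
        omega
  have hinj : Set.InjOn f (extNbhd G S) := by
    intro u1 h1 u2 h2' hfeq
    obtain ⟨hle1, hd1⟩ := hjf u1 h1
    obtain ⟨hle2, hd2⟩ := hjf u2 h2'
    rw [hf] at hfeq
    by_cases c1 : u1 = p0.getVert (jf u1) <;> by_cases c2 : u2 = p0.getVert (jf u2)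
    · simp only [if_pos c1, if_pos c2, Prod.mk.injEq] at hfeq
      have := getVert_inj hp0 (i := jf u1 + 1) (j := jf u2 + 1) (by omega) (by omega) hfeq.1
      have hj12 : jf u1 = jf u2 := by omega
      rw [c1, c2, hj12]
    · simp only [if_pos c1, if_neg c2, Prod.mk.injEq] at hfeq
      exact absurd hfeq.2 (by simp)
    · simp only [if_neg c1, if_pos c2, Prod.mk.injEq] at hfeq
      exact absurd hfeq.2 (by simp)
    · simp only [if_neg c1, if_neg c2, Prod.mk.injEq] at hfeq
      have := getVert_inj hp0 (i := jf u1) (j := jf u2) (by omega) (by omega) hfeq.1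
      have hu1' : u1 = p0.getVert (jf u1 + 1) := by
        rcases hd1 with ⟨h, -⟩ | ⟨h, -⟩
        · exact absurd h c1
        · exact h
      have hu2' : u2 = p0.getVert (jf u2 + 1) := by
        rcases hd2 with ⟨h, -⟩ | ⟨h, -⟩
        · exact absurd h c2
        · exact h
      rw [hu1', hu2', this]
  have hub : (extNbhd G S).ncard ≤ T.ncard :=
    Set.ncard_le_ncard_of_injOn f hmaps hinj (Set.toFinite T)
  have hdisjT : Disjoint (S ×ˢ ({false} : Set Bool)) ((S \ {w0}) ×ˢ ({true} : Set Bool)) := by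
    rw [Set.disjoint_left]
    rintro ⟨a, b⟩ ⟨-, hb⟩ ⟨-, hb'⟩
    simp only [Set.mem_singleton_iff] at hb hb'
    rw [hb] at hb'
    exact Bool.false_ne_true hb'
  have himg1 : (S ×ˢ ({false} : Set Bool)) = (fun z => (z, false)) '' S := by
    ext ⟨a, b⟩
    simp [eq_comm, and_comm]
  have himg2 : ((S \ {w0}) ×ˢ ({true} : Set Bool)) = (fun z => (z, true)) '' (S \ {w0}) := by
    ext ⟨a, b⟩
    simp [eq_comm, and_comm]
  have hc1 : (S ×ˢ ({false} : Set Bool)).ncard = S.ncard := by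
    rw [himg1]
    exact Set.ncard_image_of_injective _ (fun a b h => by simpa using h)
  have hc2 : ((S \ {w0}) ×ˢ ({true} : Set Bool)).ncard = S.ncard - 1 := by
    rw [himg2, Set.ncard_image_of_injective _ (fun a b h => by simpa using h)]
    exact Set.ncard_diff_singleton_of_mem hw0S
  have hTcard : T.ncard = S.ncard + (S.ncard - 1) := by
    rw [hT, Set.ncard_union_eq hdisjT (Set.toFinite _) (Set.toFinite _), hc1, hc2]
  have hSpos : 1 ≤ S.ncard := by
    have : 0 < S.ncard := (Set.ncard_pos (Set.toFinite S)).mpr ⟨w0, hw0S⟩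
    omega
  omega
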